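/- Let M ∈ ℤ^{d×d} be regular, m := |det M|, and let f be a function on the torus T^d in the Wiener algebra A(T^d) such that the bracket sums [c(f)]_h^M = Σ_{z∈ℤ^d} c_{h+M^Tz}(f) are nonzero for all h ∈ G(M^T). Define Λ_M to be the function with Fourier coefficients c_k(Λ_M) := c_k(f) / ( m · [c(f)]_h^M ), where h ∈ G(M^T) is the unique element with k ≡ h mod M^T. Then Λ_M ∈ V_M^f and Λ_M is the fundamental interpolant: Λ_M(2πy) = 1 for y ∈ P(M) ∩ ℤ^d (i.e. y = 0) and Λ_M(2πy) = 0 for all other y ∈ P(M). -/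

import Mathlib

open MeasureTheory Complex Matrix
open scoped BigOperators Classical

noncomputable section

namespace ElastFFT

variable (d : ℕ)

/-- Real action of an integer matrix on a real vector. -/
def mulVecR (M : Matrix (Fin d) (Fin d) ℤ) (y : Fin d → ℝ) : Fin d → ℝ :=
  (M.map (Int.cast : ℤ → ℝ)).mulVec y

/-- The lattice Λ(M) = M⁻¹ ℤ^d. -/
def lattice (M : Matrix (Fin d) (Fin d) ℤ) : Set (Fin d → ℝ) :=
  {y | ∃ z : Fin d → ℤ, mulVecR d M y = fun i => (z i : ℝ)}

/-- The pattern P(M) = Λ(M) ∩ [-1/2, 1/2)^d. -/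
def pattern (M : Matrix (Fin d) (Fin d) ℤ) : Set (Fin d → ℝ) :=
  {y | y ∈ lattice d M ∧ ∀ i, y i ∈ Set.Ico (-(1/2) : ℝ) (1/2)}

/-- The generating set G(N) = ℤ^d ∩ N·[-1/2,1/2)^d. -/
def genSet (N : Matrix (Fin d) (Fin d) ℤ) : Set (Fin d → ℤ) :=
  {h | ∃ y : Fin d → ℝ, (∀ i, y i ∈ Set.Ico (-(1/2) : ℝ) (1/2)) ∧
        (fun i => (h i : ℝ)) = mulVecR d N y}

/-- The fundamental cell [-π, π)^d of the torus. -/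
def cube : Set (Fin d → ℝ) := Set.univ.pi fun _ => Set.Ico (-Real.pi) Real.pi

/-- Pairing of an integer frequency and a real point. -/
def dot (k : Fin d → ℤ) (x : Fin d → ℝ) : ℝ := ∑ i, (k i : ℝ) * x i

/-- A function on the torus: 2π-periodic in each coordinate. -/
def TorusFun (f : (Fin d → ℝ) → ℂ) : Prop :=
  ∀ (x : Fin d → ℝ) (z : Fin d → ℤ), f (x + fun i => 2 * Real.pi * (z i : ℝ)) = f x

/-- The L²(𝕋^d) inner product (normalised). -/
def torusInner (f g : (Fin d → ℝ) → ℂ) : ℂ :=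
  (((2 * Real.pi) ^ d : ℝ) : ℂ)⁻¹ * ∫ x in cube d, f x * (starRingEnd ℂ) (g x)

/-- Fourier coefficient c_k(f). -/
def fCoeff (f : (Fin d → ℝ) → ℂ) (k : Fin d → ℤ) : ℂ :=
  torusInner d f fun x => Complex.exp (Complex.I * (dot d k x : ℝ))

/-- Membership in the Wiener algebra A(𝕋^d). -/
def InWiener (f : (Fin d → ℝ) → ℂ) : Prop :=
  Summable (fun k : Fin d → ℤ => ‖fCoeff d f k‖) ∧
    ∀ x, HasSum (fun k : Fin d → ℤ =>
      fCoeff d f k * Complex.exp (Complex.I * (dot d k x : ℝ))) (f x)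

/-- The translate T(y)f = f(· - 2πy). -/
def Tr (y : Fin d → ℝ) (f : (Fin d → ℝ) → ℂ) : (Fin d → ℝ) → ℂ :=
  fun x => f (x - (2 * Real.pi) • y)

/-- The space of translates V_M^f, as a set of L² functions (a.e. equality on the cube). -/
def spanTranslates (M : Matrix (Fin d) (Fin d) ℤ) (f : (Fin d → ℝ) → ℂ) :
    Set ((Fin d → ℝ) → ℂ) :=
  {g | ∃ a : (Fin d → ℝ) → ℂ,
      g =ᵐ[volume.restrict (cube d)] fun x => ∑ᶠ y ∈ pattern d M, a y * Tr d y f x}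

/-- Orthonormality of the translates of f on the pattern. -/
def OrthonormalTranslates (M : Matrix (Fin d) (Fin d) ℤ) (f : (Fin d → ℝ) → ℂ) : Prop :=
  ∀ y ∈ pattern d M, ∀ y' ∈ pattern d M,
    torusInner d (Tr d y f) (Tr d y' f) = if y = y' then 1 else 0

/-- A fundamental interpolant of V_M^f. -/
def IsFundamentalInterpolant (M : Matrix (Fin d) (Fin d) ℤ) (f Λ : (Fin d → ℝ) → ℂ) : Prop :=
  Λ ∈ spanTranslates d M f ∧
    ∀ y ∈ pattern d M,
      Λ ((2 * Real.pi) • y) = if ∃ z : Fin d → ℤ, y = fun i => (z i : ℝ) then 1 else 0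

/-- Frobenius inner product of complex matrices. -/
def frobInner (A B : Matrix (Fin d) (Fin d) ℂ) : ℂ :=
  ∑ i, ∑ j, A i j * (starRingEnd ℂ) (B i j)

/-- Application of a fourth-order (real) tensor to a complex matrix. -/
def capply (C : Fin d → Fin d → Fin d → Fin d → ℝ) (γ : Matrix (Fin d) (Fin d) ℂ) :
    Matrix (Fin d) (Fin d) ℂ :=
  Matrix.of fun i j => ∑ a, ∑ b, (C i j a b : ℂ) * γ a b

/-- The usual symmetries of a stiffness tensor. -/
def TensorSymm (C : Fin d → Fin d → Fin d → Fin d → ℝ) : Prop :=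
  ∀ i j k l, C i j k l = C j i k l ∧ C i j k l = C i j l k ∧ C i j k l = C k l i j

/-- Positive definiteness of a reference stiffness on symmetric matrices. -/
def TensorPosDef (C : Fin d → Fin d → Fin d → Fin d → ℝ) : Prop :=
  ∃ c : ℝ, 0 < c ∧ ∀ γ : Matrix (Fin d) (Fin d) ℂ, γ.IsSymm →
    c * ∑ i, ∑ j, Complex.normSq (γ i j) ≤ (frobInner d (capply d C γ) γ).re

/-- The symmetrised gradient D_k u = (i/2)(k uᵀ + u kᵀ). -/
def symGrad (k : Fin d → ℝ) (u : Fin d → ℂ) : Matrix (Fin d) (Fin d) ℂ :=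
  Matrix.of fun i j => (Complex.I / 2) * ((k i : ℂ) * u j + u i * (k j : ℂ))

/-- The adjoint D_k* of the symmetrised gradient (w.r.t. Frobenius inner product). -/
def symGradAdj (k : Fin d → ℝ) (A : Matrix (Fin d) (Fin d) ℂ) : Fin d → ℂ :=
  fun j => ∑ i, (-Complex.I / 2) * (k i : ℂ) * (A i j + A j i)

/-- The acoustic tensor A(k) = D_k* ∘ C⁰ ∘ D_k as a d×d complex matrix. -/
def acoustic (C0 : Fin d → Fin d → Fin d → Fin d → ℝ) (k : Fin d → ℝ) :
    Matrix (Fin d) (Fin d) ℂ :=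
  Matrix.of fun i j => symGradAdj d k (capply d C0 (symGrad d k (Pi.single j 1))) i

/-- The Green operator symbol Γ̂⁰_k = D_k ∘ A(k)⁻¹ ∘ D_k* for real k ≠ 0. -/
def greenSymR (C0 : Fin d → Fin d → Fin d → Fin d → ℝ) (k : Fin d → ℝ)
    (E : Matrix (Fin d) (Fin d) ℂ) : Matrix (Fin d) (Fin d) ℂ :=
  symGrad d k ((acoustic d C0 k)⁻¹.mulVec (symGradAdj d k E))

/-- The Green operator symbol for integer frequencies, Γ̂⁰_0 := 0. -/
def greenSymZ (C0 : Fin d → Fin d → Fin d → Fin d → ℝ) (k : Fin d → ℤ)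
    (E : Matrix (Fin d) (Fin d) ℂ) : Matrix (Fin d) (Fin d) ℂ :=
  if k = 0 then 0 else greenSymR d C0 (fun i => (k i : ℝ)) E

/-- Entrywise Fourier coefficient of a matrix field. -/
def mFourier (ε : (Fin d → ℝ) → Matrix (Fin d) (Fin d) ℂ) (k : Fin d → ℤ) :
    Matrix (Fin d) (Fin d) ℂ :=
  Matrix.of fun i j => fCoeff d (fun x => ε x i j) k

/-- The periodised Green symbol Γ̂^p_h = m Σ_z Γ̂⁰_{h+Mᵀz} |c_{h+Mᵀz}(f)|². -/
def gammaPSym (M : Matrix (Fin d) (Fin d) ℤ) (C0 : Fin d → Fin d → Fin d → Fin d → ℝ)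
    (f : (Fin d → ℝ) → ℂ) (h : Fin d → ℤ) (E : Matrix (Fin d) (Fin d) ℂ) :
    Matrix (Fin d) (Fin d) ℂ :=
  (M.det.natAbs : ℂ) • ∑' z : Fin d → ℤ,
    ((Complex.normSq (fCoeff d f (h + Matrix.mulVec Mᵀ z)) : ℝ) : ℂ) •
      greenSymZ d C0 (h + Matrix.mulVec Mᵀ z) E

/-- The periodised Green operator applied to a coefficient field: DFT, multiply, inverse DFT. -/
def gammaP (M : Matrix (Fin d) (Fin d) ℤ) (C0 : Fin d → Fin d → Fin d → Fin d → ℝ)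
    (f : (Fin d → ℝ) → ℂ) (V : (Fin d → ℝ) → Matrix (Fin d) (Fin d) ℂ)
    (x : Fin d → ℝ) : Matrix (Fin d) (Fin d) ℂ :=
  ((M.det.natAbs : ℂ))⁻¹ • ∑ᶠ h ∈ genSet d Mᵀ,
    Complex.exp (2 * Real.pi * Complex.I * (dot d h x : ℝ)) •
      gammaPSym d M C0 f h
        (∑ᶠ y ∈ pattern d M, Complex.exp (-(2 * Real.pi * Complex.I) * (dot d h y : ℝ)) • V y)

/-- The Dirichlet kernel D_M. -/
def dirichlet (M : Matrix (Fin d) (Fin d) ℤ) : (Fin d → ℝ) → ℂ :=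
  fun x => ∑ᶠ h ∈ genSet d Mᵀ, Complex.exp (Complex.I * (dot d h x : ℝ))


section Aux

variable {d : ℕ}

lemma mulVecR_cast (N : Matrix (Fin d) (Fin d) ℤ) (z : Fin d → ℤ) :
    mulVecR d N (fun i => (z i : ℝ)) = fun i => ((N.mulVec z) i : ℝ) := by
  funext i
  simp [mulVecR, Matrix.mulVec, dotProduct]

lemma castVec_injective : Function.Injective (fun z : Fin d → ℤ => fun i => (z i : ℝ)) := by
  intro z z' h
  funext i
  have : ((z i : ℝ)) = (z' i : ℝ) := congrFun h i
  exact_mod_cast this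

lemma mulVecR_injective {N : Matrix (Fin d) (Fin d) ℤ} (hN : N.det ≠ 0) :
    Function.Injective (mulVecR d N) := by
  apply Matrix.mulVec_injective_iff_isUnit.2
  rw [Matrix.isUnit_iff_isUnit_det]
  have : (N.map (Int.cast : ℤ → ℝ)).det = ((N.det : ℤ) : ℝ) :=
    (RingHom.map_det (Int.castRingHom ℝ) N).symm
  rw [this]
  simp [isUnit_iff_ne_zero, hN]

lemma mulVecZ_injective {N : Matrix (Fin d) (Fin d) ℤ} (hN : N.det ≠ 0) :
    Function.Injective (N.mulVec : (Fin d → ℤ) → (Fin d → ℤ)) := by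
  intro z z' h
  apply castVec_injective
  apply mulVecR_injective hN
  show mulVecR d N (fun i => ((z i : ℝ))) = mulVecR d N (fun i => ((z' i : ℝ)))
  rw [mulVecR_cast, mulVecR_cast, h]

lemma box_unique {a b : ℝ} (ha : a ∈ Set.Ico (-(1/2) : ℝ) (1/2))
    (hb : b ∈ Set.Ico (-(1/2) : ℝ) (1/2)) (n : ℤ) (h : a - b = n) : a = b := by
  have h1 : (n : ℝ) < 1 := by have := ha.2; have := hb.1; linarith
  have h2 : (-1 : ℝ) < n := by have := ha.1; have := hb.2; linarith
  have h1' : n < 1 := by exact_mod_cast h1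
  have h2' : -1 < n := by exact_mod_cast h2
  have : n = 0 := by omega
  rw [this] at h; push_cast at h; linarith

lemma boxVec_unique {y y' : Fin d → ℝ} (hy : ∀ i, y i ∈ Set.Ico (-(1/2) : ℝ) (1/2))
    (hy' : ∀ i, y' i ∈ Set.Ico (-(1/2) : ℝ) (1/2)) (z : Fin d → ℤ)
    (h : y - y' = fun i => (z i : ℝ)) : y = y' := by
  funext i
  exact box_unique (hy i) (hy' i) (z i) (congrFun h i)

lemma genSet_unique {N : Matrix (Fin d) (Fin d) ℤ} (hN : N.det ≠ 0)
    {h h' : Fin d → ℤ} (hh : h ∈ genSet d N) (hh' : h' ∈ genSet d N)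
    (z : Fin d → ℤ) (hz : h = h' + Matrix.mulVec N z) : h = h' := by
  obtain ⟨y, hy, hyy⟩ := hh
  obtain ⟨y', hy', hyy'⟩ := hh'
  have key : mulVecR d N (y - y') = mulVecR d N (fun i => (z i : ℝ)) := by
    rw [mulVecR_cast]
    have : mulVecR d N (y - y') = mulVecR d N y - mulVecR d N y' := by
      unfold mulVecR; rw [Matrix.mulVec_sub]
    rw [this, ← hyy, ← hyy']
    funext i
    have := congrFun hz i
    simp only [Pi.sub_apply, Pi.add_apply] at this ⊢
    rw [this]
    push_cast
    ring
  have hyz : y - y' = fun i => (z i : ℝ) := mulVecR_injective hN key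
  have hyeq : y = y' := boxVec_unique hy hy' z hyz
  apply castVec_injective
  show (fun i => ((h i : ℝ))) = fun i => ((h' i : ℝ))
  rw [hyy, hyy', hyeq]

end Aux
section Aux2

variable {d : ℕ}

lemma sub_round_mem_box (x : ℝ) : x - (⌊x + 1/2⌋ : ℤ) ∈ Set.Ico (-(1/2) : ℝ) (1/2) := by
  constructor
  · have := Int.floor_le (x + 1/2); linarith
  · have := Int.lt_floor_add_one (x + 1/2); linarith

/-- The integer "rounding" vector. -/
def rvec (v : Fin d → ℝ) : Fin d → ℤ := fun i => ⌊v i + 1/2⌋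

/-- Reduction into the fundamental box. -/
def redu (v : Fin d → ℝ) : Fin d → ℝ := v - fun i => ((rvec v i : ℤ) : ℝ)

lemma redu_box (v : Fin d → ℝ) : ∀ i, redu v i ∈ Set.Ico (-(1/2) : ℝ) (1/2) :=
  fun i => sub_round_mem_box (v i)

lemma redu_sub (v : Fin d → ℝ) : v - redu v = fun i => ((rvec v i : ℤ) : ℝ) := by
  funext i; simp [redu]

lemma lattice_sub_cast {M : Matrix (Fin d) (Fin d) ℤ} {v : Fin d → ℝ}
    (hv : v ∈ lattice d M) (t : Fin d → ℤ) : v - (fun i => ((t i : ℤ) : ℝ)) ∈ lattice d M := by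
  obtain ⟨w, hw⟩ := hv
  refine ⟨w - M.mulVec t, ?_⟩
  have : mulVecR d M (v - fun i => ((t i : ℤ) : ℝ))
      = mulVecR d M v - mulVecR d M (fun i => ((t i : ℤ) : ℝ)) := by
    unfold mulVecR; rw [Matrix.mulVec_sub]
  rw [this, hw, mulVecR_cast]
  funext i
  push_cast
  simp

lemma lattice_add {M : Matrix (Fin d) (Fin d) ℤ} {v w : Fin d → ℝ}
    (hv : v ∈ lattice d M) (hw : w ∈ lattice d M) : v + w ∈ lattice d M := by
  obtain ⟨a, ha⟩ := hv
  obtain ⟨b, hb⟩ := hw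
  refine ⟨a + b, ?_⟩
  have : mulVecR d M (v + w) = mulVecR d M v + mulVecR d M w := by
    unfold mulVecR; rw [Matrix.mulVec_add]
  rw [this, ha, hb]
  funext i
  push_cast
  simp

lemma redu_mem_pattern {M : Matrix (Fin d) (Fin d) ℤ} {v : Fin d → ℝ}
    (hv : v ∈ lattice d M) : redu v ∈ pattern d M := by
  refine ⟨?_, redu_box v⟩
  have : redu v = v - fun i => ((rvec v i : ℤ) : ℝ) := rfl
  rw [this]
  exact lattice_sub_cast hv _

lemma redu_eq_of_mem_box {v p : Fin d → ℝ} (hp : ∀ i, p i ∈ Set.Ico (-(1/2) : ℝ) (1/2))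
    (t : Fin d → ℤ) (h : v - p = fun i => ((t i : ℤ) : ℝ)) : redu v = p := by
  apply boxVec_unique (redu_box v) hp (t - rvec v)
  funext i
  have h1 := congrFun h i
  simp only [Pi.sub_apply] at h1 ⊢
  simp only [redu, Pi.sub_apply]
  push_cast
  linarith

lemma abs_mulVecR_le (B : Matrix (Fin d) (Fin d) ℝ) {y : Fin d → ℝ}
    (hy : ∀ i, y i ∈ Set.Ico (-(1/2) : ℝ) (1/2)) (i : Fin d) :
    |(B.mulVec y) i| ≤ ∑ a, ∑ b, |B a b| := by
  have h1 : |(B.mulVec y) i| ≤ ∑ j, |B i j * y j| := by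
    show |∑ j, B i j * y j| ≤ _
    exact Finset.abs_sum_le_sum_abs _ _
  have h2 : ∀ j, |B i j * y j| ≤ |B i j| := by
    intro j
    rw [abs_mul]
    have : |y j| ≤ 1 := by
      have := (hy j).1; have := (hy j).2
      rw [abs_le]; constructor <;> linarith
    calc |B i j| * |y j| ≤ |B i j| * 1 := by
            exact mul_le_mul_of_nonneg_left this (abs_nonneg _)
      _ = |B i j| := mul_one _
  calc |(B.mulVec y) i| ≤ ∑ j, |B i j| := h1.trans (Finset.sum_le_sum fun j _ => h2 j)
    _ ≤ ∑ a, ∑ b, |B a b| := Finset.single_le_sum (f := fun a => ∑ b, |B a b|)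
        (fun a _ => Finset.sum_nonneg fun b _ => abs_nonneg _) (Finset.mem_univ i)

lemma genSet_finite (N : Matrix (Fin d) (Fin d) ℤ) : (genSet d N).Finite := by
  set B := N.map (Int.cast : ℤ → ℝ)
  set S : ℝ := ∑ a, ∑ b, |B a b|
  set c : ℤ := ⌈S⌉
  apply Set.Finite.subset (Set.finite_Icc (fun _ : Fin d => -c) (fun _ => c))
  rintro h ⟨y, hy, hyy⟩
  have key : ∀ i, |((h i : ℤ) : ℝ)| ≤ S := by
    intro i
    have := congrFun hyy i
    rw [this]
    exact abs_mulVecR_le B hy i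
  constructor <;> intro i
  · have := (abs_le.1 (key i)).1
    have hcs : S ≤ (c : ℝ) := Int.le_ceil S
    have : ((-c : ℤ) : ℝ) ≤ ((h i : ℤ) : ℝ) := by push_cast; linarith
    exact_mod_cast this
  · have := (abs_le.1 (key i)).2
    have hcs : S ≤ (c : ℝ) := Int.le_ceil S
    have : ((h i : ℤ) : ℝ) ≤ ((c : ℤ) : ℝ) := by push_cast; linarith
    exact_mod_cast this

lemma pattern_finite {M : Matrix (Fin d) (Fin d) ℤ} (hM : M.det ≠ 0) :
    (pattern d M).Finite := by
  set φ : (Fin d → ℝ) → (Fin d → ℤ) := fun y i => ⌊(mulVecR d M y) i⌋ with hφ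
  have hinj : Set.InjOn φ (pattern d M) := by
    rintro y ⟨⟨w, hw⟩, hy⟩ y' ⟨⟨w', hw'⟩, hy'⟩ hφeq
    have h1 : φ y = w := by funext i; have := congrFun hw i; simp [hφ, this]
    have h2 : φ y' = w' := by funext i; have := congrFun hw' i; simp [hφ, this]
    have hww : w = w' := by rw [← h1, ← h2, hφeq]
    apply mulVecR_injective hM
    rw [hw, hw', hww]
  apply Set.Finite.of_finite_image _ hinj
  set B := M.map (Int.cast : ℤ → ℝ)
  set S : ℝ := ∑ a, ∑ b, |B a b|
  set c : ℤ := ⌈S⌉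
  apply Set.Finite.subset (Set.finite_Icc (fun _ : Fin d => -c) (fun _ => c))
  rintro w ⟨y, ⟨⟨v, hv⟩, hy⟩, rfl⟩
  have key : ∀ i, |((φ y i : ℤ) : ℝ)| ≤ S := by
    intro i
    have h1 : φ y i = v i := by have := congrFun hv i; simp [hφ, this]
    have h2 : (mulVecR d M y) i = ((v i : ℤ) : ℝ) := congrFun hv i
    rw [h1, ← h2]
    exact abs_mulVecR_le B hy i
  constructor <;> intro i
  · have := (abs_le.1 (key i)).1
    have hcs : S ≤ (c : ℝ) := Int.le_ceil S
    have : ((-c : ℤ) : ℝ) ≤ ((φ y i : ℤ) : ℝ) := by push_cast at *; linarith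
    exact_mod_cast this
  · have := (abs_le.1 (key i)).2
    have hcs : S ≤ (c : ℝ) := Int.le_ceil S
    have : ((φ y i : ℤ) : ℝ) ≤ ((c : ℤ) : ℝ) := by push_cast at *; linarith
    exact_mod_cast this

lemma zero_mem_genSet (N : Matrix (Fin d) (Fin d) ℤ) : (0 : Fin d → ℤ) ∈ genSet d N := by
  refine ⟨0, fun i => ⟨by norm_num, by norm_num⟩, ?_⟩
  unfold mulVecR
  rw [Matrix.mulVec_zero]
  funext i
  simp

lemma zero_mem_pattern (M : Matrix (Fin d) (Fin d) ℤ) : (0 : Fin d → ℝ) ∈ pattern d M := by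
  refine ⟨⟨0, ?_⟩, fun i => ⟨by norm_num, by norm_num⟩⟩
  unfold mulVecR
  simp [Matrix.mulVec_zero]
  rfl

end Aux2
section Card

variable {d : ℕ}

lemma exists_genSet_rep {N : Matrix (Fin d) (Fin d) ℤ} (hN : N.det ≠ 0) (k : Fin d → ℤ) :
    ∃ h ∈ genSet d N, ∃ t : Fin d → ℤ, k = h + N.mulVec t := by
  set B := N.map (Int.cast : ℤ → ℝ) with hB
  have hBdet : B.det ≠ 0 := by
    have : B.det = ((N.det : ℤ) : ℝ) := (RingHom.map_det (Int.castRingHom ℝ) N).symm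
    rw [this]; exact_mod_cast hN
  have hBu : IsUnit B.det := isUnit_iff_ne_zero.2 hBdet
  set v : Fin d → ℝ := B⁻¹.mulVec (fun i => (k i : ℝ)) with hv
  set t : Fin d → ℤ := rvec v with ht
  refine ⟨k - N.mulVec t, ?_, t, by abel⟩
  refine ⟨redu v, redu_box v, ?_⟩
  have hvk : B.mulVec v = fun i => (k i : ℝ) := by
    rw [hv, Matrix.mulVec_mulVec, Matrix.mul_nonsing_inv _ hBu, Matrix.one_mulVec]
  have : mulVecR d N (redu v) = B.mulVec v - B.mulVec (fun i => ((t i : ℤ) : ℝ)) := by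
    unfold mulVecR redu
    rw [← hB, Matrix.mulVec_sub]
  rw [this, hvk]
  have hBt : B.mulVec (fun i => ((t i : ℤ) : ℝ)) = fun i => ((N.mulVec t i : ℤ) : ℝ) := by
    have := mulVecR_cast (d := d) N t
    unfold mulVecR at this
    rw [← hB] at this
    exact this
  rw [hBt]
  funext i
  simp only [Pi.sub_apply]
  push_cast
  ring

lemma card_genSet {N : Matrix (Fin d) (Fin d) ℤ} (hN : N.det ≠ 0) :
    Nat.card (genSet d N) = N.det.natAbs := by
  classical
  set T : (Fin d → ℤ) →ₗ[ℤ] (Fin d → ℤ) := Matrix.toLin' N with hT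
  have hTapp : ∀ x, T x = N.mulVec x := fun x => Matrix.toLin'_apply N x
  have hTinj : Function.Injective T := by
    intro x y hxy
    exact mulVecZ_injective hN (by rw [← hTapp, ← hTapp, hxy])
  set P : Submodule ℤ (Fin d → ℤ) := LinearMap.range T with hP
  -- genSet is in bijection with the quotient
  have hb : Function.Bijective
      (fun h : genSet d N => (QuotientAddGroup.mk h.1 : (Fin d → ℤ) ⧸ P.toAddSubgroup)) := by
    constructor
    · rintro ⟨h, hh⟩ ⟨h', hh'⟩ he
      have : -h + h' ∈ P.toAddSubgroup := (QuotientAddGroup.eq (a := h) (b := h')).1 he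
      obtain ⟨z, hz⟩ := this
      have : h' = h + N.mulVec z := by
        rw [← hTapp, hz]; abel
      have := genSet_unique hN hh' hh z this
      exact Subtype.ext this.symm
    · intro q
      induction q using QuotientAddGroup.induction_on with
      | H k =>
        obtain ⟨h, hh, t, hkt⟩ := exists_genSet_rep hN k
        refine ⟨⟨h, hh⟩, ?_⟩
        apply (QuotientAddGroup.eq (a := h) (b := k)).2
        exact ⟨t, by rw [hTapp]; rw [hkt]; abel⟩
  have hcard1 : Nat.card (genSet d N) = P.toAddSubgroup.index := by
    rw [AddSubgroup.index]
    exact Nat.card_eq_of_bijective _ hb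
  -- index equals |det| via Smith normal form
  have hne : P.toAddSubgroup.index ≠ 0 := by
    rw [Int.submodule_toAddSubgroup_index_ne_zero_iff]
    exact ⟨(LinearEquiv.ofInjective T hTinj).symm⟩
  obtain ⟨n, snf⟩ := P.smithNormalForm (Pi.basisFun ℤ (Fin d))
  have hn : n = d := by
    have := snf.toAddSubgroup_index_ne_zero_iff.1 hne
    simpa using this
  have hfbij : Function.Bijective snf.f :=
    (Fintype.bijective_iff_injective_and_card snf.f).2 ⟨snf.f.injective, by simp [hn]⟩
  set ef : Fin n ≃ Fin d := Equiv.ofBijective snf.f hfbij with hef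
  have hefapp : ∀ i, ef i = snf.f i := fun i => rfl
  -- the index is the product of the diagonal entries
  have hidx : P.toAddSubgroup.index = (∏ i, snf.a i).natAbs := by
    rw [snf.toAddSubgroup_index_eq_ite, if_pos (by simpa using hn)]
    rw [show (∏ i, snf.a i).natAbs = ∏ i, (snf.a i).natAbs from
      map_prod Int.natAbsHom _ Finset.univ]
    apply Finset.prod_congr rfl
    intro i _
    rw [Ideal.span_singleton_toAddSubgroup_eq_zmultiples, Int.index_zmultiples]
  -- determinant computation
  set e2 : (Fin d → ℤ) ≃ₗ[ℤ] P := snf.bM.equiv snf.bN ef.symm with he2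
  set g : (Fin d → ℤ) →ₗ[ℤ] (Fin d → ℤ) := P.subtype ∘ₗ (e2 : (Fin d → ℤ) →ₗ[ℤ] P) with hg
  have hgapp : ∀ j, g (snf.bM j) = snf.a (ef.symm j) • snf.bM j := by
    intro j
    have h1 : e2 (snf.bM j) = snf.bN (ef.symm j) := snf.bM.equiv_apply _ snf.bN ef.symm
    have h2 : g (snf.bM j) = (snf.bN (ef.symm j) : Fin d → ℤ) := by
      rw [hg]; simp only [LinearMap.coe_comp, Function.comp_apply, LinearEquiv.coe_coe, h1]
      rfl
    rw [h2, snf.snf (ef.symm j)]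
    congr 1
    have : snf.f (ef.symm j) = ef (ef.symm j) := (hefapp _).symm
    rw [this, Equiv.apply_symm_apply]
  have hdetg : LinearMap.det g = ∏ i, snf.a i := by
    have hmat : LinearMap.toMatrix snf.bM snf.bM g
        = Matrix.diagonal (fun j => snf.a (ef.symm j)) := by
      ext i j
      rw [LinearMap.toMatrix_apply, hgapp j, _root_.map_smul, Module.Basis.repr_self]
      by_cases hij : i = j
      · subst hij; simp
      · simp [Finsupp.single_apply, Ne.symm hij, Matrix.diagonal_apply_ne _ hij]
    have := LinearMap.det_toMatrix snf.bM g
    rw [← this, hmat, Matrix.det_diagonal]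
    exact Fintype.prod_equiv ef.symm _ _ (fun j => rfl)
  set e1 : (Fin d → ℤ) ≃ₗ[ℤ] P := LinearEquiv.ofInjective T hTinj with he1
  have hT2 : T = P.subtype ∘ₗ (e1 : (Fin d → ℤ) →ₗ[ℤ] P) := by
    apply LinearMap.ext; intro x; rfl
  have hassoc : Associated (LinearMap.det (P.subtype ∘ₗ (e1 : (Fin d → ℤ) →ₗ[ℤ] P)))
      (LinearMap.det (P.subtype ∘ₗ (e2 : (Fin d → ℤ) →ₗ[ℤ] P))) :=
    LinearMap.associated_det_comp_equiv _ _ _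
  have hdetT : LinearMap.det T = N.det := LinearMap.det_toLin' N
  have : N.det.natAbs = (∏ i, snf.a i).natAbs := by
    rw [← hdetT, hT2, ← hdetg, hg]
    exact Int.natAbs_eq_iff_associated.2 hassoc
  rw [hcard1, hidx, this]

end Card
section Char

variable {d : ℕ}

/-- The character e^{2πi k·y}. -/
def ch (k : Fin d → ℤ) (y : Fin d → ℝ) : ℂ :=
  Complex.exp (Complex.I * ((dot d k ((2 * Real.pi) • y)) : ℝ))

lemma dot_add_left (k k' : Fin d → ℤ) (x : Fin d → ℝ) :
    dot d (k + k') x = dot d k x + dot d k' x := by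
  unfold dot
  rw [← Finset.sum_add_distrib]
  apply Finset.sum_congr rfl
  intro i _
  simp only [Pi.add_apply]
  push_cast
  ring

lemma dot_neg_left (k : Fin d → ℤ) (x : Fin d → ℝ) : dot d (-k) x = -dot d k x := by
  unfold dot
  rw [← Finset.sum_neg_distrib]
  apply Finset.sum_congr rfl
  intro i _
  simp only [Pi.neg_apply]
  push_cast
  ring

lemma dot_add_right (k : Fin d → ℤ) (x x' : Fin d → ℝ) :
    dot d k (x + x') = dot d k x + dot d k x' := by
  unfold dot
  rw [← Finset.sum_add_distrib]
  apply Finset.sum_congr rfl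
  intro i _
  simp only [Pi.add_apply]
  ring

lemma dot_sub_right (k : Fin d → ℤ) (x x' : Fin d → ℝ) :
    dot d k (x - x') = dot d k x - dot d k x' := by
  unfold dot
  rw [← Finset.sum_sub_distrib]
  apply Finset.sum_congr rfl
  intro i _
  simp only [Pi.sub_apply]
  ring

lemma dot_smul_right (k : Fin d → ℤ) (c : ℝ) (x : Fin d → ℝ) :
    dot d k (c • x) = c * dot d k x := by
  unfold dot
  rw [Finset.mul_sum]
  apply Finset.sum_congr rfl
  intro i _
  simp only [Pi.smul_apply, smul_eq_mul]
  ring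

lemma dot_cast (k z : Fin d → ℤ) :
    dot d k (fun i => (z i : ℝ)) = ((∑ i, k i * z i : ℤ) : ℝ) := by
  unfold dot
  push_cast
  rfl

lemma dot_single (j : Fin d) (x : Fin d → ℝ) : dot d (Pi.single j 1) x = x j := by
  unfold dot
  rw [Finset.sum_eq_single j]
  · simp
  · intro i _ hij
    simp [Pi.single_apply, hij]
  · simp

lemma ch_eq_exp (k : Fin d → ℤ) (y : Fin d → ℝ) :
    ch k y = Complex.exp ((dot d k y : ℂ) * (2 * Real.pi * Complex.I)) := by
  unfold ch
  congr 1
  rw [dot_smul_right]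
  push_cast
  ring

lemma ch_eq_one_iff (k : Fin d → ℤ) (y : Fin d → ℝ) :
    ch k y = 1 ↔ ∃ n : ℤ, dot d k y = (n : ℝ) := by
  rw [ch_eq_exp, Complex.exp_eq_one_iff]
  constructor
  · rintro ⟨n, hn⟩
    refine ⟨n, ?_⟩
    have h2 : (2 * (Real.pi : ℂ) * Complex.I) ≠ 0 := by
      simp [Real.pi_ne_zero, Complex.I_ne_zero]
    have := mul_right_cancel₀ h2 hn
    exact_mod_cast this
  · rintro ⟨n, hn⟩
    exact ⟨n, by rw [hn]; push_cast; ring⟩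

lemma ch_add_left (k k' : Fin d → ℤ) (y : Fin d → ℝ) :
    ch (k + k') y = ch k y * ch k' y := by
  rw [ch_eq_exp, ch_eq_exp, ch_eq_exp, ← Complex.exp_add, dot_add_left]
  congr 1
  push_cast
  ring

lemma ch_add_right (k : Fin d → ℤ) (y y' : Fin d → ℝ) :
    ch k (y + y') = ch k y * ch k y' := by
  rw [ch_eq_exp, ch_eq_exp, ch_eq_exp, ← Complex.exp_add, dot_add_right]
  push_cast
  ring_nf

lemma ch_cast_eq_one (k z : Fin d → ℤ) : ch k (fun i => (z i : ℝ)) = 1 := by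
  rw [ch_eq_one_iff]
  exact ⟨∑ i, k i * z i, dot_cast k z⟩

lemma ch_redu (k : Fin d → ℤ) (w : Fin d → ℝ) : ch k (redu w) = ch k w := by
  have h : w = redu w + fun i => ((rvec w i : ℤ) : ℝ) := by
    have := redu_sub w
    funext i
    have hi := congrFun this i
    simp only [Pi.sub_apply] at hi
    simp only [Pi.add_apply]
    linarith
  conv_rhs => rw [h]
  rw [ch_add_right, ch_cast_eq_one, mul_one]

lemma dot_transpose_mulVec (M : Matrix (Fin d) (Fin d) ℤ) (z : Fin d → ℤ) (y : Fin d → ℝ) :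
    dot d (Matrix.mulVec Mᵀ z) y = ∑ j, (z j : ℝ) * (mulVecR d M y j) := by
  unfold dot mulVecR
  have lhs : ∀ i, ((Matrix.mulVec Mᵀ z) i : ℝ) * y i = ∑ j, (M j i : ℝ) * z j * y i := by
    intro i
    rw [← Finset.sum_mul]
    congr 1
    simp only [Matrix.mulVec, dotProduct, Matrix.transpose_apply]
    push_cast
    rfl
  have rhs : ∀ j, (z j : ℝ) * ((M.map (Int.cast : ℤ → ℝ)).mulVec y j)
      = ∑ i, (M j i : ℝ) * z j * y i := by
    intro j
    simp only [Matrix.mulVec, dotProduct, Matrix.map_apply]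
    rw [Finset.mul_sum]
    apply Finset.sum_congr rfl
    intro i _
    ring
  calc ∑ i, ((Matrix.mulVec Mᵀ z) i : ℝ) * y i = ∑ i, ∑ j, (M j i : ℝ) * z j * y i :=
        Finset.sum_congr rfl fun i _ => lhs i
    _ = ∑ j, ∑ i, (M j i : ℝ) * z j * y i := Finset.sum_comm
    _ = _ := Finset.sum_congr rfl fun j _ => (rhs j).symm

lemma ch_transpose_mulVec {M : Matrix (Fin d) (Fin d) ℤ} (z : Fin d → ℤ) {y : Fin d → ℝ}
    (hy : y ∈ lattice d M) : ch (Matrix.mulVec Mᵀ z) y = 1 := by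
  rw [ch_eq_one_iff]
  obtain ⟨w, hw⟩ := hy
  refine ⟨∑ j, z j * w j, ?_⟩
  rw [dot_transpose_mulVec, hw]
  push_cast
  rfl

lemma ch_eq_of_congr {M : Matrix (Fin d) (Fin d) ℤ} {k h : Fin d → ℤ} (z : Fin d → ℤ)
    (hz : k = h + Matrix.mulVec Mᵀ z) {y : Fin d → ℝ} (hy : y ∈ lattice d M) :
    ch k y = ch h y := by
  rw [hz, ch_add_left, ch_transpose_mulVec z hy, mul_one]

end Char
section CharSum

variable {d : ℕ}

lemma lattice_neg {M : Matrix (Fin d) (Fin d) ℤ} {v : Fin d → ℝ}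
    (hv : v ∈ lattice d M) : -v ∈ lattice d M := by
  obtain ⟨w, hw⟩ := hv
  refine ⟨-w, ?_⟩
  have : mulVecR d M (-v) = -mulVecR d M v := by
    unfold mulVecR; rw [Matrix.mulVec_neg]
  rw [this, hw]
  funext i
  push_cast
  simp

lemma r_eq {M : Matrix (Fin d) (Fin d) ℤ} (hM : M.det ≠ 0)
    {r : (Fin d → ℤ) → (Fin d → ℤ)}
    (hr : ∀ k : Fin d → ℤ, r k ∈ genSet d Mᵀ ∧
      ∃ z : Fin d → ℤ, k = r k + Matrix.mulVec Mᵀ z)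
    {h k : Fin d → ℤ} (hh : h ∈ genSet d Mᵀ) (z : Fin d → ℤ)
    (hz : k = h + Matrix.mulVec Mᵀ z) : r k = h := by
  have hMT : Mᵀ.det ≠ 0 := by rwa [Matrix.det_transpose]
  obtain ⟨z', hz'⟩ := (hr k).2
  apply genSet_unique hMT (hr k).1 hh (z - z')
  rw [Matrix.mulVec_sub]
  have : r k = k - Matrix.mulVec Mᵀ z' := by rw [eq_sub_iff_add_eq]; exact hz'.symm
  rw [this, hz]
  abel

lemma redu_shift_cancel {p w : Fin d → ℝ} (hp : ∀ i, p i ∈ Set.Ico (-(1/2) : ℝ) (1/2)) :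
    redu (redu (p + w) + (-w)) = p := by
  apply redu_eq_of_mem_box hp (-(rvec (p + w)))
  have h := redu_sub (p + w)
  funext i
  have hi := congrFun h i
  simp only [Pi.sub_apply, Pi.add_apply] at hi
  simp only [Pi.sub_apply, Pi.add_apply, Pi.neg_apply, redu]
  push_cast
  linarith

lemma sum_ch_genSet {M : Matrix (Fin d) (Fin d) ℤ} (hM : M.det ≠ 0)
    {r : (Fin d → ℤ) → (Fin d → ℤ)}
    (hr : ∀ k : Fin d → ℤ, r k ∈ genSet d Mᵀ ∧
      ∃ z : Fin d → ℤ, k = r k + Matrix.mulVec Mᵀ z)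
    {y : Fin d → ℝ} (hy : y ∈ pattern d M) :
    ∑ h ∈ (genSet_finite (d := d) Mᵀ).toFinset, ch h y =
      if ∃ z : Fin d → ℤ, y = fun i => (z i : ℝ) then (M.det.natAbs : ℂ) else 0 := by
  split_ifs with hcase
  · obtain ⟨z, rfl⟩ := hcase
    rw [Finset.sum_congr rfl (fun h _ => ch_cast_eq_one h z), Finset.sum_const, nsmul_eq_mul,
      mul_one]
    congr 1
    have h1 : (genSet_finite (d := d) Mᵀ).toFinset.card = Nat.card (genSet d Mᵀ) := by
      rw [Nat.card_eq_card_finite_toFinset]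
    have hMT : Mᵀ.det ≠ 0 := by rwa [Matrix.det_transpose]
    rw [h1, card_genSet hMT, Matrix.det_transpose]
  · -- find a coordinate of y that is not an integer
    have hj : ∃ j, ¬ ∃ n : ℤ, y j = (n : ℝ) := by
      by_contra hcon
      push_neg at hcon
      apply hcase
      choose n hn using hcon
      exact ⟨n, funext fun i => hn i⟩
    obtain ⟨j, hj⟩ := hj
    set u : Fin d → ℤ := Pi.single j 1 with hu
    have hchu : ch u y ≠ 1 := by
      rw [Ne, ch_eq_one_iff, dot_single]
      exact hj
    set G := (genSet_finite (d := d) Mᵀ).toFinset with hG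
    have hmemG : ∀ k : Fin d → ℤ, r k ∈ G := fun k => (Set.Finite.mem_toFinset _).2 (hr k).1
    have hGset : ∀ a, a ∈ G → a ∈ genSet d Mᵀ := fun a ha => (Set.Finite.mem_toFinset _).1 ha
    have key : ∀ h : Fin d → ℤ, ch (r (h + u)) y = ch h y * ch u y := by
      intro h
      obtain ⟨z, hz⟩ := (hr (h + u)).2
      have h1 : ch (h + u) y = ch (r (h + u)) y := ch_eq_of_congr z hz hy.1
      rw [← h1, ch_add_left]
    have hbij : ∑ a ∈ G, ch (r (a + u)) y = ∑ b ∈ G, ch b y := by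
      apply Finset.sum_nbij' (i := fun a => r (a + u)) (j := fun b => r (b + (-u)))
      · intro a _; exact hmemG _
      · intro a _; exact hmemG _
      · intro a ha
        obtain ⟨z0, hz0⟩ := (hr (a + u)).2
        apply r_eq hM hr (hGset a ha) (-z0)
        rw [Matrix.mulVec_neg]
        have : r (a + u) = a + u - Matrix.mulVec Mᵀ z0 := by
          rw [eq_sub_iff_add_eq]; exact hz0.symm
        rw [this]; abel
      · intro a ha
        obtain ⟨z0, hz0⟩ := (hr (a + (-u))).2
        apply r_eq hM hr (hGset a ha) (-z0)
        rw [Matrix.mulVec_neg]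
        have : r (a + (-u)) = a + (-u) - Matrix.mulVec Mᵀ z0 := by
          rw [eq_sub_iff_add_eq]; exact hz0.symm
        rw [this]; abel
      · intro a _; rfl
    have hS : (∑ h ∈ G, ch h y) * ch u y = ∑ h ∈ G, ch h y := by
      rw [Finset.sum_mul]
      rw [← hbij]
      apply Finset.sum_congr rfl
      intro h _
      exact (key h).symm
    have : (∑ h ∈ G, ch h y) * (ch u y - 1) = 0 := by
      rw [mul_sub, hS, mul_one, sub_self]
    rcases mul_eq_zero.1 this with h0 | h0
    · exact h0
    · exact absurd (sub_eq_zero.1 h0) hchu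

lemma sum_ch_pattern {M : Matrix (Fin d) (Fin d) ℤ} (hM : M.det ≠ 0) (g : Fin d → ℤ) :
    ∑ y ∈ (pattern_finite hM).toFinset, ch g y =
      if ∃ z : Fin d → ℤ, g = Matrix.mulVec Mᵀ z
        then ((pattern_finite hM).toFinset.card : ℂ) else 0 := by
  set P := (pattern_finite hM).toFinset with hP
  have hPset : ∀ y, y ∈ P → y ∈ pattern d M := fun y hy => (Set.Finite.mem_toFinset _).1 hy
  split_ifs with hcase
  · obtain ⟨z, rfl⟩ := hcase
    rw [Finset.sum_congr rfl (fun y hy => ch_transpose_mulVec z (hPset y hy).1),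
      Finset.sum_const, nsmul_eq_mul, mul_one]
  · set B := M.map (Int.cast : ℤ → ℝ) with hB
    have hBdet : B.det ≠ 0 := by
      have : B.det = ((M.det : ℤ) : ℝ) := (RingHom.map_det (Int.castRingHom ℝ) M).symm
      rw [this]; exact_mod_cast hM
    have hBu : IsUnit B.det := isUnit_iff_ne_zero.2 hBdet
    have hj : ∃ j, ¬ ∃ n : ℤ, dot d g (fun i => B⁻¹ i j) = (n : ℝ) := by
      by_contra hcon
      push_neg at hcon
      choose s hs using hcon
      apply hcase
      refine ⟨s, ?_⟩
      apply castVec_injective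
      show (fun i => ((g i : ℤ) : ℝ)) = fun i => ((Matrix.mulVec Mᵀ s i : ℤ) : ℝ)
      rw [← mulVecR_cast]
      set x : Fin d → ℝ := fun i => ((g i : ℤ) : ℝ) with hx
      have h1 : Matrix.vecMul x B⁻¹ = fun j => ((s j : ℤ) : ℝ) := by
        funext j
        rw [← hs j]
        unfold dot Matrix.vecMul dotProduct
        rfl
      have h2 : x = Matrix.vecMul (fun j => ((s j : ℤ) : ℝ)) B := by
        rw [← h1, Matrix.vecMul_vecMul, Matrix.nonsing_inv_mul B hBu, Matrix.vecMul_one]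
      have h3 : mulVecR d Mᵀ (fun i => ((s i : ℤ) : ℝ)) = Matrix.vecMul (fun j => ((s j : ℤ) : ℝ)) B := by
        unfold mulVecR
        have htm : (Mᵀ).map (Int.cast : ℤ → ℝ) = Bᵀ := by
          rw [hB, Matrix.transpose_map]
        rw [htm]
        exact Matrix.mulVec_transpose B _
      rw [h3, ← h2]
    obtain ⟨j, hj⟩ := hj
    set lam : Fin d → ℝ := fun i => B⁻¹ i j with hlam
    have hlat : lam ∈ lattice d M := by
      refine ⟨Pi.single j 1, ?_⟩
      funext i
      show (B.mulVec lam) i = _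
      have : (B.mulVec lam) i = (B * B⁻¹) i j := by
        rw [Matrix.mul_apply]
        rfl
      rw [this, Matrix.mul_nonsing_inv B hBu, Matrix.one_apply]
      rw [Pi.single_apply]
      split_ifs <;> simp
    have hchl : ch g lam ≠ 1 := by
      rw [Ne, ch_eq_one_iff]
      exact hj
    have key : ∀ y, ch g (redu (y + lam)) = ch g y * ch g lam := by
      intro y
      rw [ch_redu, ch_add_right]
    have hmem : ∀ y ∈ P, redu (y + lam) ∈ P := by
      intro y hy
      exact (Set.Finite.mem_toFinset _).2 (redu_mem_pattern (lattice_add (hPset y hy).1 hlat))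
    have hmem' : ∀ y ∈ P, redu (y + (-lam)) ∈ P := by
      intro y hy
      exact (Set.Finite.mem_toFinset _).2
        (redu_mem_pattern (lattice_add (hPset y hy).1 (lattice_neg hlat)))
    have hbij : ∑ y ∈ P, ch g (redu (y + lam)) = ∑ p ∈ P, ch g p := by
      apply Finset.sum_nbij' (i := fun y => redu (y + lam)) (j := fun y => redu (y + (-lam)))
      · exact hmem
      · exact hmem'
      · intro y hy
        exact redu_shift_cancel (hPset y hy).2
      · intro y hy
        have := redu_shift_cancel (p := y) (w := -lam) (hPset y hy).2
        simpa using this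
      · intro y _; rfl
    have hS : (∑ y ∈ P, ch g y) * ch g lam = ∑ y ∈ P, ch g y := by
      rw [Finset.sum_mul, ← hbij]
      apply Finset.sum_congr rfl
      intro y _
      exact (key y).symm
    have : (∑ y ∈ P, ch g y) * (ch g lam - 1) = 0 := by
      rw [mul_sub, hS, mul_one, sub_self]
    rcases mul_eq_zero.1 this with h0 | h0
    · exact h0
    · exact absurd (sub_eq_zero.1 h0) hchl

end CharSum
section Residues

variable {d : ℕ}

/-- Reindexing a sum over `ℤ^d` by residues modulo `Mᵀ`. -/
lemma tsum_residues {M : Matrix (Fin d) (Fin d) ℤ} (hM : M.det ≠ 0)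
    {r : (Fin d → ℤ) → (Fin d → ℤ)}
    (hr : ∀ k : Fin d → ℤ, r k ∈ genSet d Mᵀ ∧
      ∃ z : Fin d → ℤ, k = r k + Matrix.mulVec Mᵀ z)
    (F : (Fin d → ℤ) → ℂ) (hF : Summable F) :
    ∑' k : Fin d → ℤ, F k
      = ∑' (a : {h // h ∈ (genSet_finite (d := d) Mᵀ).toFinset}) (z : Fin d → ℤ),
          F (a.1 + Matrix.mulVec Mᵀ z) := by
  classical
  have hMT : Mᵀ.det ≠ 0 := by rwa [Matrix.det_transpose]
  have hinjMT : Function.Injective (Matrix.mulVec Mᵀ : (Fin d → ℤ) → (Fin d → ℤ)) :=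
    mulVecZ_injective hMT
  set Gfin : Finset (Fin d → ℤ) := (genSet_finite (d := d) Mᵀ).toFinset with hGfin
  have hmemG : ∀ k, r k ∈ Gfin := fun k => (Set.Finite.mem_toFinset _).2 (hr k).1
  have hGset : ∀ a, a ∈ Gfin → a ∈ genSet d Mᵀ := fun a ha => (Set.Finite.mem_toFinset _).1 ha
  set zOf : (Fin d → ℤ) → (Fin d → ℤ) := fun k => Classical.choose (hr k).2 with hzOfdef
  have hzOf : ∀ k, k = r k + Matrix.mulVec Mᵀ (zOf k) := fun k => Classical.choose_spec (hr k).2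
  set σ : ({h // h ∈ Gfin} × (Fin d → ℤ)) ≃ (Fin d → ℤ) :=
    { toFun := fun p => p.1.1 + Matrix.mulVec Mᵀ p.2
      invFun := fun k => (⟨r k, hmemG k⟩, zOf k)
      left_inv := by
        rintro ⟨⟨h, hh⟩, z⟩
        have h1 : r (h + Matrix.mulVec Mᵀ z) = h := r_eq hM hr (hGset h hh) z rfl
        have h2 : zOf (h + Matrix.mulVec Mᵀ z) = z := by
          apply hinjMT
          have := hzOf (h + Matrix.mulVec Mᵀ z)
          rw [h1] at this
          exact (add_left_cancel this.symm)
        simp only [h1, h2]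
      right_inv := fun k => (hzOf k).symm } with hσ
  have e1 : ∑' k, F k = ∑' p : {h // h ∈ Gfin} × (Fin d → ℤ), F (σ p) :=
    (σ.tsum_eq F).symm
  have hsump : Summable (fun p : {h // h ∈ Gfin} × (Fin d → ℤ) => F (σ p)) :=
    σ.summable_iff.2 hF
  rw [e1, Summable.tsum_prod' hsump (fun b => hsump.prod_factor b)]
  exact tsum_congr fun b => tsum_congr fun c => rfl

lemma summable_mul_char {d : ℕ} (c : ℂ) (F : (Fin d → ℤ) → ℂ)
    (hF : Summable fun k => ‖F k‖) (g1 g2 : (Fin d → ℤ) → ℂ)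
    (hg1 : ∀ k, ‖g1 k‖ = 1) (hg2 : ∀ k, ‖g2 k‖ = 1) :
    Summable (fun k => c * (F k * g1 k * g2 k)) := by
  apply Summable.of_norm
  apply Summable.of_nonneg_of_le (fun k => norm_nonneg _) _ (hF.mul_left ‖c‖)
  intro k
  rw [norm_mul, norm_mul, norm_mul, hg1 k, hg2 k, mul_one, mul_one]

end Residues
/-- construction of the fundamental interpolant from nonvanishing
bracket sums. -/
theorem fundamentalInterpolant_construction
    (d : ℕ) (hd : 0 < d)
    (M : Matrix (Fin d) (Fin d) ℤ) (hM : M.det ≠ 0)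
    (f : (Fin d → ℝ) → ℂ) (hfper : TorusFun d f) (hfW : InWiener d f)
    (r : (Fin d → ℤ) → (Fin d → ℤ))
    (hr : ∀ k : Fin d → ℤ, r k ∈ genSet d Mᵀ ∧
      ∃ z : Fin d → ℤ, k = r k + Matrix.mulVec Mᵀ z)
    (hbr : ∀ h ∈ genSet d Mᵀ,
      (∑' z : Fin d → ℤ, fCoeff d f (h + Matrix.mulVec Mᵀ z)) ≠ 0) :
    IsFundamentalInterpolant d M f
      (fun x => ∑' k : Fin d → ℤ,
        (fCoeff d f k /
            ((M.det.natAbs : ℂ) *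
              ∑' z : Fin d → ℤ, fCoeff d f (r k + Matrix.mulVec Mᵀ z))) *
          Complex.exp (Complex.I * (dot d k x : ℝ))) := by
  classical
  have hMT : Mᵀ.det ≠ 0 := by rwa [Matrix.det_transpose]
  set mC : ℂ := (M.det.natAbs : ℂ) with hmC
  have hm0 : mC ≠ 0 := by
    rw [hmC]
    exact_mod_cast Nat.cast_ne_zero.2 (Int.natAbs_ne_zero.2 hM)
  set B : (Fin d → ℤ) → ℂ := fun h => ∑' z : Fin d → ℤ, fCoeff d f (h + Matrix.mulVec Mᵀ z)
    with hBdef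
  set c' : (Fin d → ℤ) → ℂ := fun k => fCoeff d f k / (mC * B (r k)) with hc'
  set E : (Fin d → ℤ) → (Fin d → ℝ) → ℂ :=
    fun k x => Complex.exp (Complex.I * (dot d k x : ℝ)) with hEdef
  set Gfin : Finset (Fin d → ℤ) := (genSet_finite (d := d) Mᵀ).toFinset with hGfin
  have hmemG : ∀ k, r k ∈ Gfin := fun k => (Set.Finite.mem_toFinset _).2 (hr k).1
  have hGset : ∀ a, a ∈ Gfin → a ∈ genSet d Mᵀ := fun a ha => (Set.Finite.mem_toFinset _).1 ha
  have hG0 : (0 : Fin d → ℤ) ∈ Gfin := (Set.Finite.mem_toFinset _).2 (zero_mem_genSet Mᵀ)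
  have hBne : ∀ h ∈ Gfin, B h ≠ 0 := fun h hh => hbr h (hGset h hh)
  have hsummC : Summable (fun k => fCoeff d f k) := hfW.1.of_norm
  have hinjMT : Function.Injective (Matrix.mulVec Mᵀ : (Fin d → ℤ) → (Fin d → ℤ)) :=
    mulVecZ_injective hMT
  have hinj_shift : ∀ h : Fin d → ℤ,
      Function.Injective (fun z : Fin d → ℤ => h + Matrix.mulVec Mᵀ z) := by
    intro h z z' hzz
    exact hinjMT (by simpa using add_left_cancel hzz)
  -- zOf
  set zOf : (Fin d → ℤ) → (Fin d → ℤ) := fun k => Classical.choose (hr k).2 with hzOfdef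
  have hzOf : ∀ k, k = r k + Matrix.mulVec Mᵀ (zOf k) := fun k => Classical.choose_spec (hr k).2
  -- norm of characters
  have hnormE : ∀ (t : ℝ), ‖Complex.exp (Complex.I * (t : ℂ))‖ = 1 := by
    intro t
    rw [mul_comm]
    exact Complex.norm_exp_ofReal_mul_I t
  -- uniform bound on the inverse bracket factors
  obtain ⟨C, hC⟩ : ∃ C : ℝ, ∀ k, ‖(mC * B (r k))⁻¹‖ ≤ C := by
    set S : Finset ℝ := Gfin.image (fun h => ‖(mC * B h)⁻¹‖) with hS
    have hne : S.Nonempty := ⟨‖(mC * B 0)⁻¹‖, by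
      rw [hS]; exact Finset.mem_image_of_mem _ hG0⟩
    refine ⟨S.max' hne, ?_⟩
    intro k
    apply Finset.le_max' S
    rw [hS]
    exact Finset.mem_image_of_mem _ (hmemG k)
  -- summability of the interpolant coefficients
  have hnorm_cE : ∀ (g : (Fin d → ℤ) → ℂ), (∀ k, ‖g k‖ = 1) →
      Summable (fun k => c' k * g k) := by
    intro g hg
    apply Summable.of_norm
    apply Summable.of_nonneg_of_le (fun k => norm_nonneg _) _ (hfW.1.mul_left C)
    intro k
    rw [hc']
    simp only []
    rw [div_eq_mul_inv, norm_mul, norm_mul, hg k, mul_one]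
    calc ‖fCoeff d f k‖ * ‖(mC * B (r k))⁻¹‖ ≤ ‖fCoeff d f k‖ * C :=
          mul_le_mul_of_nonneg_left (hC k) (norm_nonneg _)
      _ = C * ‖fCoeff d f k‖ := mul_comm _ _
  have hch1 : ∀ (k : Fin d → ℤ) (y : Fin d → ℝ), ‖ch k y‖ = 1 := by
    intro k y
    exact hnormE _
  -- Part 2 : interpolation values
  have part2 : ∀ y ∈ pattern d M, (∑' k, c' k * ch k y)
      = if ∃ z : Fin d → ℤ, y = fun i => (z i : ℝ) then 1 else 0 := by
    intro y hy
    have hsum : Summable (fun k => c' k * ch k y) := hnorm_cE _ (fun k => hch1 k y)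
    have e12 : ∑' k, c' k * ch k y
        = ∑' (a : {h // h ∈ (genSet_finite (d := d) Mᵀ).toFinset}) (z : Fin d → ℤ),
            c' (a.1 + Matrix.mulVec Mᵀ z) * ch (a.1 + Matrix.mulVec Mᵀ z) y :=
      tsum_residues hM hr (fun k => c' k * ch k y) hsum
    have e3 : ∀ a : {h // h ∈ (genSet_finite (d := d) Mᵀ).toFinset}, (∑' z : Fin d → ℤ,
        c' (a.1 + Matrix.mulVec Mᵀ z) * ch (a.1 + Matrix.mulVec Mᵀ z) y)
        = mC⁻¹ * ch a.1 y := by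
      rintro ⟨h, hh⟩
      have hra : ∀ z : Fin d → ℤ, r (h + Matrix.mulVec Mᵀ z) = h :=
        fun z => r_eq hM hr (hGset h hh) z rfl
      have step : ∀ z : Fin d → ℤ,
          c' (h + Matrix.mulVec Mᵀ z) * ch (h + Matrix.mulVec Mᵀ z) y
          = fCoeff d f (h + Matrix.mulVec Mᵀ z) * ((mC * B h)⁻¹ * ch h y) := by
        intro z
        have hch : ch (h + Matrix.mulVec Mᵀ z) y = ch h y := ch_eq_of_congr z rfl hy.1
        rw [hc']
        simp only [hra z, hch, div_eq_mul_inv]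
        ring
      rw [tsum_congr step, tsum_mul_right]
      have : (∑' z : Fin d → ℤ, fCoeff d f (h + Matrix.mulVec Mᵀ z)) = B h := rfl
      rw [this]
      rw [mul_inv, ← mul_assoc]
      rw [mul_comm (B h) (mC⁻¹ * (B h)⁻¹), mul_assoc mC⁻¹ (B h)⁻¹ (B h),
        inv_mul_cancel₀ (hBne h hh), mul_one]
    have e4 : ∑' (a : {h // h ∈ (genSet_finite (d := d) Mᵀ).toFinset}), mC⁻¹ * ch a.1 y
        = mC⁻¹ * ∑ h ∈ (genSet_finite (d := d) Mᵀ).toFinset, ch h y := by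
      rw [tsum_fintype, ← Finset.mul_sum]
      congr 1
      exact Finset.sum_coe_sort _ (fun h => ch h y)
    rw [e12, tsum_congr e3, e4]
    rw [sum_ch_genSet hM hr hy]
    split_ifs with hcase
    · rw [← hmC, inv_mul_cancel₀ hm0]
    · rw [mul_zero]
  -- Part 1 : membership in the span of translates
  have part1 : (fun x => ∑' k, c' k * E k x) ∈ spanTranslates d M f := by
    set Pfin : Finset (Fin d → ℝ) := (pattern_finite hM).toFinset with hPfin
    have hPset : ∀ y, y ∈ Pfin → y ∈ pattern d M := fun y hy => (Set.Finite.mem_toFinset _).1 hy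
    have hP0 : (0 : Fin d → ℝ) ∈ Pfin := (Set.Finite.mem_toFinset _).2 (zero_mem_pattern M)
    set pC : ℂ := (Pfin.card : ℂ) with hpC
    have hpC0 : pC ≠ 0 := by
      rw [hpC]
      exact_mod_cast Nat.cast_ne_zero.2 (Finset.card_ne_zero_of_mem hP0)
    set a : (Fin d → ℝ) → ℂ := fun y => pC⁻¹ * ∑ h ∈ Gfin, (mC * B h)⁻¹ * ch h y with ha
    refine ⟨a, ?_⟩
    apply Filter.Eventually.of_forall
    intro x
    -- the key character-sum identity
    have hkey : ∀ k : Fin d → ℤ, (∑ y ∈ Pfin, a y * ch (-k) y) = (mC * B (r k))⁻¹ := by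
      intro k
      have step1 : ∀ y ∈ Pfin, a y * ch (-k) y
          = pC⁻¹ * ∑ h ∈ Gfin, (mC * B h)⁻¹ * ch (h + (-k)) y := by
        intro y hy
        rw [ha]
        simp only []
        rw [mul_assoc, Finset.sum_mul]
        congr 1
        apply Finset.sum_congr rfl
        intro h _
        rw [ch_add_left, mul_assoc]
      rw [Finset.sum_congr rfl step1, ← Finset.mul_sum, Finset.sum_comm]
      have step2 : ∀ h ∈ Gfin, (∑ y ∈ Pfin, (mC * B h)⁻¹ * ch (h + (-k)) y)
          = (mC * B h)⁻¹ * ∑ y ∈ Pfin, ch (h + (-k)) y := by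
        intro h _
        rw [Finset.mul_sum]
      rw [Finset.sum_congr rfl step2]
      have step3 : ∀ h ∈ Gfin, (mC * B h)⁻¹ * ∑ y ∈ Pfin, ch (h + (-k)) y
          = if h = r k then (mC * B h)⁻¹ * pC else 0 := by
        intro h hh
        have hsum2 : ∑ y ∈ Pfin, ch (h + (-k)) y
            = if ∃ z : Fin d → ℤ, h + (-k) = Matrix.mulVec Mᵀ z then pC else 0 := by
          rw [hPfin, hpC]
          exact sum_ch_pattern hM (h + (-k))
        rw [hsum2]
        by_cases hcase : h = r k
        · have hex : ∃ z : Fin d → ℤ, h + (-k) = Matrix.mulVec Mᵀ z := by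
            refine ⟨-(zOf k), ?_⟩
            rw [Matrix.mulVec_neg]
            have h5 : r k = k - Matrix.mulVec Mᵀ (zOf k) := by
              rw [eq_sub_iff_add_eq]; exact (hzOf k).symm
            rw [hcase, h5]
            abel
          rw [if_pos hex, if_pos hcase]
        · have hnex : ¬∃ z : Fin d → ℤ, h + (-k) = Matrix.mulVec Mᵀ z := by
            rintro ⟨z, hz⟩
            apply hcase
            have hk : k = h + Matrix.mulVec Mᵀ (-z) := by
              rw [Matrix.mulVec_neg, eq_comm, ← sub_eq_zero,
                show h + -(Matrix.mulVec Mᵀ z) - k = (h + -k) - Matrix.mulVec Mᵀ z by abel,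
                hz]
              abel
            exact (r_eq hM hr (hGset h hh) (-z) hk).symm
          rw [if_neg hnex, if_neg hcase, mul_zero]
      rw [Finset.sum_congr rfl step3, Finset.sum_ite_eq' Gfin (r k) (fun h => (mC * B h)⁻¹ * pC),
        if_pos (hmemG k)]
      rw [← mul_assoc, mul_comm pC⁻¹ ((mC * B (r k))⁻¹), mul_assoc,
        inv_mul_cancel₀ hpC0, mul_one]
    -- summability for each translate
    have hsummy : ∀ y : Fin d → ℝ,
        Summable (fun k => a y * (fCoeff d f k * E k x * ch (-k) y)) := by
      intro y
      exact summable_mul_char (a y) _ hfW.1 _ _ (fun k => hnormE _) (fun k => hch1 _ _)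
    -- expansion of the translates
    have hTr : ∀ y ∈ Pfin, a y * Tr d y f x
        = ∑' k, a y * (fCoeff d f k * E k x * ch (-k) y) := by
      intro y _
      have hx' : Tr d y f x = f (x - (2 * Real.pi) • y) := rfl
      have hhs := (hfW.2 (x - (2 * Real.pi) • y)).tsum_eq
      rw [hx', ← hhs, ← tsum_mul_left]
      apply tsum_congr
      intro k
      have hdot : (dot d k (x - (2 * Real.pi) • y) : ℂ)
          = (dot d k x : ℂ) + (dot d (-k) ((2 * Real.pi) • y) : ℂ) := by
        rw [dot_sub_right, dot_neg_left]
        push_cast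
        ring
      have hexp : Complex.exp (Complex.I * (dot d k (x - (2 * Real.pi) • y) : ℝ))
          = E k x * ch (-k) y := by
        rw [hEdef]
        simp only []
        unfold ch
        rw [← Complex.exp_add, ← mul_add, hdot]
      rw [hexp]
      ring
    -- swap sum and tsum
    have hswap : ∑ y ∈ Pfin, (∑' k, a y * (fCoeff d f k * E k x * ch (-k) y))
        = ∑' k, ∑ y ∈ Pfin, a y * (fCoeff d f k * E k x * ch (-k) y) :=
      (Summable.tsum_finsetSum (fun y _ => hsummy y)).symm
    have hfinal : ∀ k : Fin d → ℤ, (∑ y ∈ Pfin, a y * (fCoeff d f k * E k x * ch (-k) y))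
        = c' k * E k x := by
      intro k
      have : ∑ y ∈ Pfin, a y * (fCoeff d f k * E k x * ch (-k) y)
          = (fCoeff d f k * E k x) * ∑ y ∈ Pfin, a y * ch (-k) y := by
        rw [Finset.mul_sum]
        apply Finset.sum_congr rfl
        intro y _
        ring
      rw [this, hkey k, hc']
      simp only []
      rw [div_eq_mul_inv]
      ring
    -- put everything together
    show (∑' k, c' k * E k x) = ∑ᶠ y ∈ pattern d M, a y * Tr d y f x
    have hpat : pattern d M = (Pfin : Set (Fin d → ℝ)) := (Set.Finite.coe_toFinset _).symm
    rw [hpat, finsum_mem_coe_finset]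
    rw [Finset.sum_congr rfl hTr, hswap]
    apply tsum_congr
    intro k
    exact (hfinal k).symm
  -- assemble
  constructor
  · exact part1
  · intro y hy
    have := part2 y hy
    exact this
end ElastFFT
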